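/- For n ≥ 6, in the graph Γ_n there is exactly one 4-cycle passing through the edge from (0,1) to (0,2), namely the cycle (0,1), (0,2), (0,3), (0,4), (0,1). -/
import Mathlib


/-- The 4-Cayley graph `Γ` of `H = (ℤ/2)^m` (with `m = n - 2`): vertices are the
four copies `H × {0,1,2,3}` of `H`, with `(h,i)` adjacent to `(g,j)` iff
`g - h ∈ T i j`, for the connection sets of Definition 3.2 of the paper
(the paper's labels `1,2,3,4` correspond to `0,1,2,3` here, and `aₖ` is the
`k`-th standard basis vector, 0-indexed). -/
def gammaGraph (m : ℕ) (hm : 4 ≤ m) : SimpleGraph ((Fin m → ZMod 2) × Fin 4) :=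
  SimpleGraph.fromRel (fun p q =>
    (p.2 = 0 ∧ q.2 = 0 ∧ ∃ i : Fin m, q.1 - p.1 = Pi.single i 1) ∨
    (p.2 = 1 ∧ q.2 = 1 ∧
      ((∃ i : Fin m, ∃ h : i.val + 3 ≤ m,
          q.1 - p.1 = Pi.single i 1 + Pi.single (⟨i.val + 2, by omega⟩ : Fin m) 1) ∨
        q.1 - p.1 = Pi.single (⟨m - 2, by omega⟩ : Fin m) 1 +
          Pi.single (⟨m - 1, by omega⟩ : Fin m) 1)) ∨
    (p.2 = 2 ∧ q.2 = 2 ∧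
      ((∃ i : Fin m, ∃ h : i.val + 3 ≤ m,
          q.1 - p.1 = Pi.single i 1 + Pi.single (⟨i.val + 1, by omega⟩ : Fin m) 1 +
            Pi.single (⟨i.val + 2, by omega⟩ : Fin m) 1) ∨
        q.1 - p.1 = Pi.single (⟨m - 2, by omega⟩ : Fin m) 1 +
          Pi.single (⟨m - 1, by omega⟩ : Fin m) 1)) ∨
    (p.2 = 3 ∧ q.2 = 3 ∧
      ((∃ i : Fin m, ∃ h : i.val + 3 ≤ m,
          q.1 - p.1 = Pi.single i 1 + Pi.single (⟨i.val + 1, by omega⟩ : Fin m) 1) ∨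
        q.1 - p.1 = Pi.single (⟨m - 2, by omega⟩ : Fin m) 1 ∨
        q.1 - p.1 = Pi.single (⟨m - 1, by omega⟩ : Fin m) 1)) ∨
    (p.2 = 0 ∧ q.2 = 1 ∧ q.1 = p.1) ∨
    (p.2 = 0 ∧ q.2 = 3 ∧ q.1 = p.1) ∨
    (p.2 = 2 ∧ q.2 = 3 ∧ q.1 = p.1) ∨
    (p.2 = 1 ∧ q.2 = 2 ∧
      (q.1 = p.1 ∨ q.1 - p.1 = Pi.single (⟨m - 1, by omega⟩ : Fin m) 1)))

/-- `C` is (the edge set of) a 4-cycle in the graph `G`: there are four distinct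
vertices `a, b, c, d`, consecutively adjacent, whose four cycle edges make up `C`. -/
def IsFourCycle {V : Type*} (G : SimpleGraph V) (C : Set (Sym2 V)) : Prop :=
  ∃ a b c d : V, a ≠ b ∧ a ≠ c ∧ a ≠ d ∧ b ≠ c ∧ b ≠ d ∧ c ≠ d ∧
    G.Adj a b ∧ G.Adj b c ∧ G.Adj c d ∧ G.Adj d a ∧
    C = {s(a, b), s(b, c), s(c, d), s(d, a)}

lemma negZ {m : ℕ} (x : Fin m → ZMod 2) : -x = x :=
  funext fun i => ZMod.neg_eq_self_mod_two (x i)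

lemma single_ne_pair {m : ℕ} {i k k' : Fin m} (hkk : k ≠ k') :
    (Pi.single i 1 : Fin m → ZMod 2) ≠ Pi.single k 1 + Pi.single k' 1 := by
  intro h
  have h1 := congrFun h k
  have h2 := congrFun h k'
  simp [Pi.single_apply, hkk, hkk.symm] at h1 h2
  exact hkk (h1.trans h2.symm)

lemma single_ne_zero' {m : ℕ} (j : Fin m) : (Pi.single j 1 : Fin m → ZMod 2) ≠ 0 := by
  intro h
  have := congrFun h j
  simp at this

lemma not_adj_02 (m : ℕ) (hm : 4 ≤ m) {p q : (Fin m → ZMod 2) × Fin 4} (hp : p.2 = 0) (hq : q.2 = 2) :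
    ¬ (gammaGraph m hm).Adj p q := by
  intro h
  rw [gammaGraph, SimpleGraph.fromRel_adj] at h
  obtain ⟨-, h | h⟩ := h <;>
    rcases h with ⟨h1,h2,h3⟩|⟨h1,h2,h3⟩|⟨h1,h2,h3⟩|⟨h1,h2,h3⟩|⟨h1,h2,h3⟩|⟨h1,h2,h3⟩|⟨h1,h2,h3⟩|⟨h1,h2,h3⟩ <;>
    simp_all

lemma not_adj_13 (m : ℕ) (hm : 4 ≤ m) {p q : (Fin m → ZMod 2) × Fin 4} (hp : p.2 = 1) (hq : q.2 = 3) :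
    ¬ (gammaGraph m hm).Adj p q := by
  intro h
  rw [gammaGraph, SimpleGraph.fromRel_adj] at h
  obtain ⟨-, h | h⟩ := h <;>
    rcases h with ⟨h1,h2,h3⟩|⟨h1,h2,h3⟩|⟨h1,h2,h3⟩|⟨h1,h2,h3⟩|⟨h1,h2,h3⟩|⟨h1,h2,h3⟩|⟨h1,h2,h3⟩|⟨h1,h2,h3⟩ <;>
    simp_all

lemma adj_01_val (m : ℕ) (hm : 4 ≤ m) {p q : (Fin m → ZMod 2) × Fin 4} (hp : p.2 = 0) (hq : q.2 = 1)
    (h : (gammaGraph m hm).Adj p q) : q.1 = p.1 := by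
  rw [gammaGraph, SimpleGraph.fromRel_adj] at h
  obtain ⟨-, h | h⟩ := h <;>
    rcases h with ⟨h1,h2,h3⟩|⟨h1,h2,h3⟩|⟨h1,h2,h3⟩|⟨h1,h2,h3⟩|⟨h1,h2,h3⟩|⟨h1,h2,h3⟩|⟨h1,h2,h3⟩|⟨h1,h2,h3⟩ <;>
    simp_all

lemma adj_23_val (m : ℕ) (hm : 4 ≤ m) {p q : (Fin m → ZMod 2) × Fin 4} (hp : p.2 = 2) (hq : q.2 = 3)
    (h : (gammaGraph m hm).Adj p q) : q.1 = p.1 := by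
  rw [gammaGraph, SimpleGraph.fromRel_adj] at h
  obtain ⟨-, h | h⟩ := h <;>
    rcases h with ⟨h1,h2,h3⟩|⟨h1,h2,h3⟩|⟨h1,h2,h3⟩|⟨h1,h2,h3⟩|⟨h1,h2,h3⟩|⟨h1,h2,h3⟩|⟨h1,h2,h3⟩|⟨h1,h2,h3⟩ <;>
    simp_all

lemma adj00 (m : ℕ) (hm : 4 ≤ m) {p : (Fin m → ZMod 2) × Fin 4}
    (h : (gammaGraph m hm).Adj (0, 0) p) :
    (∃ i, p = (Pi.single i 1, 0)) ∨ p = (0, 1) ∨ p = (0, 3) := by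
  rw [gammaGraph, SimpleGraph.fromRel_adj] at h
  obtain ⟨-, h | h⟩ := h <;>
    rcases h with ⟨h1,h2,⟨i,h3⟩⟩|⟨h1,h2,h3⟩|⟨h1,h2,h3⟩|⟨h1,h2,h3⟩|⟨h1,h2,h3⟩|⟨h1,h2,h3⟩|⟨h1,h2,h3⟩|⟨h1,h2,h3⟩ <;>
    simp_all
  · exact Or.inl ⟨i, Prod.ext h3 h2⟩
  · exact Or.inr (Or.inl (Prod.ext h3 h2))
  · exact Or.inr (Or.inr (Prod.ext h3 h2))
  · exact Or.inl ⟨i, Prod.ext (by rw [← negZ p.1, h3]) h1⟩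

lemma adj01 (m : ℕ) (hm : 4 ≤ m) {p : (Fin m → ZMod 2) × Fin 4}
    (h : (gammaGraph m hm).Adj (0, 1) p) :
    p = (0, 0) ∨
    (∃ k k' : Fin m, k ≠ k' ∧ p = (Pi.single k 1 + Pi.single k' 1, 1)) ∨
    p = (0, 2) ∨ p = (Pi.single (⟨m - 1, by omega⟩ : Fin m) 1, 2) := by
  rw [gammaGraph, SimpleGraph.fromRel_adj] at h
  obtain ⟨-, h | h⟩ := h <;>
    rcases h with ⟨h1,h2,h3⟩|⟨h1,h2,h3⟩|⟨h1,h2,h3⟩|⟨h1,h2,h3⟩|⟨h1,h2,h3⟩|⟨h1,h2,h3⟩|⟨h1,h2,h3⟩|⟨h1,h2,h3⟩ <;>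
    simp_all
  · refine Or.inr (Or.inl ?_)
    rcases h3 with ⟨i, hi, h3⟩ | h3
    · exact ⟨i, ⟨i.val + 2, by omega⟩, by (intro he; apply congrArg Fin.val at he; simp at he),
        Prod.ext h3 h2⟩
    · exact ⟨⟨m - 2, by omega⟩, ⟨m - 1, by omega⟩,
        by (intro he; apply congrArg Fin.val at he; simp at he; omega), Prod.ext h3 h2⟩
  · rcases h3 with h3 | h3
    · exact Or.inr (Or.inr (Or.inl (Prod.ext h3 h2)))
    · exact Or.inr (Or.inr (Or.inr (Prod.ext h3 h2)))
  · rw [negZ] at h3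
    refine Or.inr (Or.inl ?_)
    rcases h3 with ⟨i, hi, h3⟩ | h3
    · exact ⟨i, ⟨i.val + 2, by omega⟩, by (intro he; apply congrArg Fin.val at he; simp at he),
        Prod.ext h3 h1⟩
    · exact ⟨⟨m - 2, by omega⟩, ⟨m - 1, by omega⟩,
        by (intro he; apply congrArg Fin.val at he; simp at he; omega), Prod.ext h3 h1⟩
  · exact Or.inl (Prod.ext rfl h1)

lemma keyL (m : ℕ) (hm : 4 ≤ m) {x y : (Fin m → ZMod 2) × Fin 4}
    (h0x : (gammaGraph m hm).Adj (0, 0) x) (hxy : (gammaGraph m hm).Adj x y)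
    (hy1 : (gammaGraph m hm).Adj y (0, 1)) (hx : x ≠ (0, 1)) (hy : y ≠ (0, 0)) :
    x = (0, 3) ∧ y = (0, 2) := by
  have hyc := adj01 m hm hy1.symm
  rcases adj00 m hm h0x with ⟨i, rfl⟩ | rfl | rfl
  · rcases hyc with rfl | ⟨k, k', hkk, rfl⟩ | rfl | rfl
    · exact absurd rfl hy
    · have := adj_01_val m hm rfl rfl hxy
      exact absurd this.symm (single_ne_pair hkk)
    · exact absurd hxy (not_adj_02 m hm rfl rfl)
    · exact absurd hxy (not_adj_02 m hm rfl rfl)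
  · exact absurd rfl hx
  · rcases hyc with rfl | ⟨k, k', hkk, rfl⟩ | rfl | rfl
    · exact absurd rfl hy
    · exact absurd hxy.symm (not_adj_13 m hm rfl rfl)
    · exact ⟨rfl, rfl⟩
    · have := adj_23_val m hm rfl rfl hxy.symm
      exact absurd this.symm (single_ne_zero' _)

lemma cycleDet (m : ℕ) (hm : 4 ≤ m) {a b c d : (Fin m → ZMod 2) × Fin 4}
    (hbd : b ≠ d) (hac : a ≠ c)
    (hab : (gammaGraph m hm).Adj a b) (hbc : (gammaGraph m hm).Adj b c)
    (hcd : (gammaGraph m hm).Adj c d) (hda : (gammaGraph m hm).Adj d a)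
    (ha : a = (0, 0)) (hb : b = (0, 1)) : c = (0, 2) ∧ d = (0, 3) := by
  subst ha hb
  have := keyL m hm hda.symm hcd.symm hbc.symm hbd.symm hac.symm
  exact ⟨this.2, this.1⟩



lemma adjA (m : ℕ) (hm : 4 ≤ m) :
    (gammaGraph m hm).Adj ((0 : Fin m → ZMod 2), (0 : Fin 4)) (0, 1) := by
  rw [gammaGraph, SimpleGraph.fromRel_adj]
  exact ⟨fun h => by simpa using congrArg Prod.snd h,
    Or.inl (Or.inr (Or.inr (Or.inr (Or.inr (Or.inl ⟨rfl, rfl, rfl⟩)))))⟩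

lemma adjB (m : ℕ) (hm : 4 ≤ m) :
    (gammaGraph m hm).Adj ((0 : Fin m → ZMod 2), (1 : Fin 4)) (0, 2) := by
  rw [gammaGraph, SimpleGraph.fromRel_adj]
  exact ⟨fun h => by simpa using congrArg Prod.snd h,
    Or.inl (Or.inr (Or.inr (Or.inr (Or.inr (Or.inr (Or.inr (Or.inr ⟨rfl, rfl, Or.inl rfl⟩)))))))⟩

lemma adjC (m : ℕ) (hm : 4 ≤ m) :
    (gammaGraph m hm).Adj ((0 : Fin m → ZMod 2), (2 : Fin 4)) (0, 3) := by
  rw [gammaGraph, SimpleGraph.fromRel_adj]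
  exact ⟨fun h => by simpa using congrArg Prod.snd h,
    Or.inl (Or.inr (Or.inr (Or.inr (Or.inr (Or.inr (Or.inr (Or.inl ⟨rfl, rfl, rfl⟩)))))))⟩

lemma adjD (m : ℕ) (hm : 4 ≤ m) :
    (gammaGraph m hm).Adj ((0 : Fin m → ZMod 2), (3 : Fin 4)) (0, 0) := by
  rw [gammaGraph, SimpleGraph.fromRel_adj]
  exact ⟨fun h => by simpa using congrArg Prod.snd h,
    Or.inr (Or.inr (Or.inr (Or.inr (Or.inr (Or.inr (Or.inl ⟨rfl, rfl, rfl⟩))))))⟩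


/-- For `n ≥ 6`, there is exactly one 4-cycle of `Γ_n` through the edge from
`(0,1)` to `(0,2)` (labels `(0,0)`–`(0,1)` here), namely the cycle
`(0,1),(0,2),(0,3),(0,4)`. -/
theorem gamma_fourCycles_through_edge_12 (n : ℕ) (hn : 6 ≤ n) :
    {C : Set (Sym2 ((Fin (n - 2) → ZMod 2) × Fin 4)) |
        IsFourCycle (gammaGraph (n - 2) (by omega)) C ∧
        s(((0 : Fin (n - 2) → ZMod 2), (0 : Fin 4)), (0, 1)) ∈ C} =
      {{s(((0 : Fin (n - 2) → ZMod 2), (0 : Fin 4)), (0, 1)), s((0, 1), (0, 2)),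
        s((0, 2), (0, 3)), s((0, 3), (0, 0))}} := by
  have hm : 4 ≤ n - 2 := by omega
  apply Set.eq_singleton_iff_unique_mem.mpr
  constructor
  · refine ⟨⟨(0, 0), (0, 1), (0, 2), (0, 3), ?_, ?_, ?_, ?_, ?_, ?_,
      adjA _ _, adjB _ _, adjC _ _, adjD _ _, rfl⟩, Set.mem_insert _ _⟩ <;>
      exact fun h => by simpa using congrArg Prod.snd h
  · rintro C ⟨⟨a, b, c, d, hab, hac, had, hbc, hbd, hcd, Aab, Abc, Acd, Ada, rfl⟩, hmem⟩
    simp only [Set.mem_insert_iff, Set.mem_singleton_iff, Sym2.eq_iff] at hmem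
    rcases hmem with (⟨h1, h2⟩ | ⟨h1, h2⟩) | (⟨h1, h2⟩ | ⟨h1, h2⟩) |
      (⟨h1, h2⟩ | ⟨h1, h2⟩) | (⟨h1, h2⟩ | ⟨h1, h2⟩) <;> subst h1 <;> subst h2
    · obtain ⟨rfl, rfl⟩ := cycleDet (n - 2) hm hbd hac Aab Abc Acd Ada rfl rfl
      rfl
    · obtain ⟨rfl, rfl⟩ := cycleDet (n - 2) hm hac hbd Aab.symm Ada.symm Acd.symm Abc.symm
        rfl rfl
      ext e
      simp only [Set.mem_insert_iff, Set.mem_singleton_iff]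
      constructor <;> rintro (rfl | rfl | rfl | rfl) <;> simp [Sym2.eq_iff, Prod.ext_iff]
    · obtain ⟨rfl, rfl⟩ := cycleDet (n - 2) hm hac.symm hbd Abc Acd Ada Aab rfl rfl
      ext e
      simp only [Set.mem_insert_iff, Set.mem_singleton_iff]
      constructor <;> rintro (rfl | rfl | rfl | rfl) <;> simp [Sym2.eq_iff, Prod.ext_iff]
    · obtain ⟨rfl, rfl⟩ := cycleDet (n - 2) hm hbd hac.symm Abc.symm Aab.symm Ada.symm Acd.symm
        rfl rfl
      ext e
      simp only [Set.mem_insert_iff, Set.mem_singleton_iff]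
      constructor <;> rintro (rfl | rfl | rfl | rfl) <;> simp [Sym2.eq_iff, Prod.ext_iff]
    · obtain ⟨rfl, rfl⟩ := cycleDet (n - 2) hm hbd.symm hac.symm Acd Ada Aab Abc rfl rfl
      ext e
      simp only [Set.mem_insert_iff, Set.mem_singleton_iff]
      constructor <;> rintro (rfl | rfl | rfl | rfl) <;> simp [Sym2.eq_iff, Prod.ext_iff]
    · obtain ⟨rfl, rfl⟩ := cycleDet (n - 2) hm hac.symm hbd.symm Acd.symm Abc.symm Aab.symm
        Ada.symm rfl rfl
      ext e
      simp only [Set.mem_insert_iff, Set.mem_singleton_iff]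
      constructor <;> rintro (rfl | rfl | rfl | rfl) <;> simp [Sym2.eq_iff, Prod.ext_iff]
    · obtain ⟨rfl, rfl⟩ := cycleDet (n - 2) hm hac hbd.symm Ada Aab Abc Acd rfl rfl
      ext e
      simp only [Set.mem_insert_iff, Set.mem_singleton_iff]
      constructor <;> rintro (rfl | rfl | rfl | rfl) <;> simp [Sym2.eq_iff, Prod.ext_iff]
    · obtain ⟨rfl, rfl⟩ := cycleDet (n - 2) hm hbd.symm hac Ada.symm Acd.symm Abc.symm Aab.symm
        rfl rfl
      ext e
      simp only [Set.mem_insert_iff, Set.mem_singleton_iff]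
      constructor <;> rintro (rfl | rfl | rfl | rfl) <;> simp [Sym2.eq_iff, Prod.ext_iff]
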